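/- Let m ≥ 2 be an integer, t > 0, h₁ ≥ h₂ > 0, and 0 < ε ≤ m t h₂. Set X := 4emth₂/ε, define N_new(k) := 2(2m−1)·5^{k−1}·h₁t·X^{1/(2k)}·(4me/3)·(5/3)^{k−1} for integers k ≥ 1, and let k* := round( √( (1/2)·log_{25/3} X ) ) (which is ≥ 1 under the stated assumptions), where round(x) = ⌊x + 1/2⌋. Then N_new(k*) ≤ (8/3)·(2m−1)·m·e·t·h₁ · e^{2√( (1/2)·ln(25/3)·ln X )}. -/

import Mathlib

noncomputable section

/-- The new exponential-count bound
`N_new(k) = 2(2m-1)·5^{k-1}·h₁t·X^{1/(2k)}·(4me/3)·(5/3)^{k-1}` with `X = 4emth₂/ε`. -/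
def Nnew (m k : ℕ) (t ε h₁ h₂ : ℝ) : ℝ :=
  2 * (2 * (m : ℝ) - 1) * 5 ^ (k - 1) * (h₁ * t) *
    (4 * Real.exp 1 * (m : ℝ) * t * h₂ / ε) ^ ((1 : ℝ) / (2 * (k : ℝ))) *
    (4 * (m : ℝ) * Real.exp 1 / 3) * (5 / 3 : ℝ) ^ (k - 1)

set_option maxHeartbeats 1000000 in
/-- At the (rounded) optimal order parameter
`k* = round(√((1/2)·log_{25/3} X))`, `X = 4emth₂/ε`, which is `≥ 1` under the stated
assumptions, the bound satisfies
`N_new(k*) ≤ (8/3)(2m-1) m e t h₁ · e^{2√((1/2) ln(25/3) ln X)}`. -/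
theorem Nnew_at_optimal_k (m : ℕ) (hm : 2 ≤ m) (t ε h₁ h₂ : ℝ)
    (ht : 0 < t) (h₂pos : 0 < h₂) (h₁₂ : h₂ ≤ h₁)
    (hε0 : 0 < ε) (hε : ε ≤ (m : ℝ) * t * h₂)
    (X : ℝ) (hX : X = 4 * Real.exp 1 * (m : ℝ) * t * h₂ / ε)
    (kstar : ℤ) (hkstar : kstar = round (Real.sqrt ((1 / 2) * Real.logb (25 / 3) X))) :
    1 ≤ kstar ∧
    Nnew m kstar.toNat t ε h₁ h₂ ≤
      (8 / 3) * (2 * (m : ℝ) - 1) * (m : ℝ) * Real.exp 1 * t * h₁ *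
        Real.exp (2 * Real.sqrt ((1 / 2) * Real.log (25 / 3) * Real.log X)) := by
  have he1 : (2.7:ℝ) < Real.exp 1 := by
    have := Real.exp_one_gt_d9; linarith
  have hm2 : (2:ℝ) ≤ (m:ℝ) := by exact_mod_cast hm
  have hX4e : 4 * Real.exp 1 ≤ X := by
    rw [hX, le_div_iff₀ hε0]
    nlinarith
  have hXpos : (0:ℝ) < X := by nlinarith
  have hX1 : (1:ℝ) ≤ X := by nlinarith
  set b := Real.log (25/3) with hbdef
  set L := Real.log X with hLdef
  have hb : 0 < b := Real.log_pos (by norm_num)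
  have hL0 : 0 ≤ L := Real.log_nonneg hX1
  have hbL : b ≤ 2 * L := by
    have h1 : (25/3:ℝ) ≤ X ^ 2 := by nlinarith
    have h2 := Real.log_le_log (by norm_num : (0:ℝ) < 25/3) h1
    rwa [Real.log_pow, Nat.cast_ofNat] at h2
  set s := Real.sqrt ((1/2) * Real.logb (25/3) X) with hsdef
  have hs0 : 0 ≤ s := Real.sqrt_nonneg _
  have hs2 : s ^ 2 = L / (2 * b) := by
    rw [hsdef, Real.sq_sqrt]
    · rw [Real.logb, ← hbdef, ← hLdef]; ring
    · rw [Real.logb, ← hbdef, ← hLdef]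
      positivity
  have hs_half : (1/2 : ℝ) ≤ s := by
    have h14 : (1/4 : ℝ) ≤ s ^ 2 := by
      rw [hs2, le_div_iff₀ (by linarith)]; linarith
    nlinarith
  have hk1 : 1 ≤ kstar := by
    rw [hkstar, round_eq, Int.le_floor]
    push_cast
    linarith
  refine ⟨hk1, ?_⟩
  set k := kstar.toNat with hkdef
  have hknat : 1 ≤ k := by omega
  have hkk : (k:ℝ) = (kstar:ℝ) := by
    have := Int.toNat_of_nonneg (show (0:ℤ) ≤ kstar by omega)
    exact_mod_cast congrArg (Int.cast : ℤ → ℝ) this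
  have hK1 : (1:ℝ) ≤ (k:ℝ) := by exact_mod_cast hknat
  have hKpos : (0:ℝ) < (k:ℝ) := by linarith
  have habs : |(k:ℝ) - s| ≤ 1/2 := by
    rw [hkk, hkstar]
    rw [abs_sub_comm]
    exact abs_sub_round s
  have hcast : ((k - 1 : ℕ) : ℝ) = (k:ℝ) - 1 := by
    rw [Nat.cast_sub hknat, Nat.cast_one]
  -- exponential forms
  have e25 : ((5:ℝ) ^ (k-1)) * ((5/3:ℝ) ^ (k-1)) = Real.exp (((k:ℝ)-1) * b) := by
    rw [← mul_pow]
    have h253 : (5:ℝ) * (5/3) = 25/3 := by norm_num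
    rw [h253, ← Real.exp_log (show (0:ℝ) < 25/3 by norm_num), ← hbdef,
      ← Real.exp_nat_mul, hcast]
  have erp : (4 * Real.exp 1 * (m : ℝ) * t * h₂ / ε) ^ ((1 : ℝ) / (2 * (k : ℝ)))
      = Real.exp (L * (1/(2*(k:ℝ)))) := by
    rw [← hX, Real.rpow_def_of_pos hXpos, ← hLdef]
  -- sqrt identity
  have hq : Real.sqrt ((1/2) * b * L) = b * s := by
    have h1 : (1/2) * b * L = (b*s)^2 := by
      rw [mul_pow, hs2]; field_simp
    rw [h1, Real.sqrt_sq (by positivity)]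
  have hLs : L = 2 * b * s ^ 2 := by
    rw [hs2]; field_simp
  -- key exponent inequality
  have key : ((k:ℝ)-1) * b + L * (1/(2*(k:ℝ))) ≤ 2 * (b * s) := by
    have hsq : ((k:ℝ) - s)^2 ≤ 1/4 := by
      have h1 : |(k:ℝ) - s|^2 ≤ (1/2:ℝ)^2 := pow_le_pow_left₀ (abs_nonneg _) habs 2
      rw [sq_abs] at h1
      linarith [h1]
    have hmain : (((k:ℝ)-1) * b) * (k:ℝ) + b * s^2 ≤ (2 * (b*s)) * (k:ℝ) := by
      have h2 : ((k:ℝ)-s)^2 ≤ (k:ℝ) := by linarith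
      have h3 := mul_le_mul_of_nonneg_left h2 hb.le
      nlinarith [h3]
    have hdiv : L * (1/(2*(k:ℝ))) = b * s^2 / (k:ℝ) := by
      rw [hLs]; field_simp
    rw [hdiv, ← sub_nonneg]
    have heq : 2*(b*s) - (((k:ℝ)-1)*b + b*s^2/(k:ℝ))
        = ((2*(b*s))*(k:ℝ) - ((((k:ℝ)-1)*b)*(k:ℝ) + b*s^2)) / (k:ℝ) := by
      field_simp
      try ring
    rw [heq]
    apply div_nonneg _ (le_of_lt hKpos)
    linarith [hmain]
  have hstep : Real.exp (((k:ℝ)-1)*b) * Real.exp (L * (1/(2*(k:ℝ))))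
      ≤ Real.exp (2*(b*s)) := by
    rw [← Real.exp_add]; exact Real.exp_le_exp.mpr key
  have hC : (0:ℝ) ≤ 2 * (2*(m:ℝ)-1) * (h₁*t) * (4*(m:ℝ)*Real.exp 1/3) := by
    have hh1 : 0 < h₁ := lt_of_lt_of_le h₂pos h₁₂
    have : (0:ℝ) < 2*(m:ℝ)-1 := by linarith
    positivity
  simp only [Nnew, erp]
  rw [hq]
  calc 2 * (2 * (m : ℝ) - 1) * 5 ^ (k - 1) * (h₁ * t) *
        Real.exp (L * (1/(2*(k:ℝ)))) * (4 * (m : ℝ) * Real.exp 1 / 3) * (5 / 3 : ℝ) ^ (k - 1)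
      = (2 * (2*(m:ℝ)-1) * (h₁*t) * (4*(m:ℝ)*Real.exp 1/3)) *
        (((5:ℝ) ^ (k-1)) * ((5/3:ℝ) ^ (k-1)) * Real.exp (L * (1/(2*(k:ℝ))))) := by ring
    _ = (2 * (2*(m:ℝ)-1) * (h₁*t) * (4*(m:ℝ)*Real.exp 1/3)) *
        (Real.exp (((k:ℝ)-1)*b) * Real.exp (L * (1/(2*(k:ℝ))))) := by rw [e25]
    _ ≤ (2 * (2*(m:ℝ)-1) * (h₁*t) * (4*(m:ℝ)*Real.exp 1/3)) * Real.exp (2*(b*s)) :=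
        mul_le_mul_of_nonneg_left hstep hC
    _ = (8 / 3) * (2 * (m : ℝ) - 1) * (m : ℝ) * Real.exp 1 * t * h₁ *
        Real.exp (2 * (b * s)) := by ring
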